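/- arXiv:1908.09098 — 5 statements merged into one kernel-verified Lean document; each statement's English description precedes it below -/
import Mathlib

section
/- Let 0 < K₂ ≤ K₁ be real numbers. Let A be a real 2×2 matrix with singular value decomposition A = U · diag(σ₁, σ₂) · Vᵀ, where U and V are orthogonal 2×2 matrices and σ₁ ≥ σ₂ ≥ 0, and assume K₂ ≤ σ₁ and σ₂ ≤ K₁. Define M* = U · diag(min(σ₁, K₁), max(σ₂, K₂)) · Vᵀ. Then for every real 2×2 matrix M satisfying K₂·‖x‖ ≤ ‖M x‖ ≤ K₁·‖x‖ for all x ∈ ℝ², one has ‖M* − A‖_F ≤ ‖M − A‖_F. -/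
open Matrix

/-- Frobenius norm of a real 2×2 matrix. -/
noncomputable def frob2 (B : Matrix (Fin 2) (Fin 2) ℝ) : ℝ :=
  Real.sqrt (∑ i : Fin 2, ∑ j : Fin 2, (B i j) ^ 2)

/-- Euclidean norm on ℝ². -/
noncomputable def euclNorm2 (x : Fin 2 → ℝ) : ℝ :=
  Real.sqrt (x 0 ^ 2 + x 1 ^ 2)

lemma ssq_left (W B : Matrix (Fin 2) (Fin 2) ℝ) (hW : Wᵀ * W = 1) :
    ∑ i : Fin 2, ∑ j : Fin 2, ((W * B) i j) ^ 2
      = ∑ i : Fin 2, ∑ j : Fin 2, (B i j) ^ 2 := by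
  have e1 : (Wᵀ * W) 0 0 = (1 : Matrix (Fin 2) (Fin 2) ℝ) 0 0 := by rw [hW]
  have e2 : (Wᵀ * W) 1 1 = (1 : Matrix (Fin 2) (Fin 2) ℝ) 1 1 := by rw [hW]
  have e3 : (Wᵀ * W) 0 1 = (1 : Matrix (Fin 2) (Fin 2) ℝ) 0 1 := by rw [hW]
  simp [Matrix.mul_apply, Fin.sum_univ_two, Matrix.one_apply] at e1 e2 e3 ⊢
  linear_combination (B 0 0 ^ 2 + B 0 1 ^ 2) * e1 + (B 1 0 ^ 2 + B 1 1 ^ 2) * e2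
    + (2 * (B 0 0 * B 1 0 + B 0 1 * B 1 1)) * e3

lemma ssq_right (W B : Matrix (Fin 2) (Fin 2) ℝ) (hW : W * Wᵀ = 1) :
    ∑ i : Fin 2, ∑ j : Fin 2, ((B * W) i j) ^ 2
      = ∑ i : Fin 2, ∑ j : Fin 2, (B i j) ^ 2 := by
  have e1 : (W * Wᵀ) 0 0 = (1 : Matrix (Fin 2) (Fin 2) ℝ) 0 0 := by rw [hW]
  have e2 : (W * Wᵀ) 1 1 = (1 : Matrix (Fin 2) (Fin 2) ℝ) 1 1 := by rw [hW]
  have e3 : (W * Wᵀ) 0 1 = (1 : Matrix (Fin 2) (Fin 2) ℝ) 0 1 := by rw [hW]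
  simp [Matrix.mul_apply, Fin.sum_univ_two, Matrix.one_apply] at e1 e2 e3 ⊢
  linear_combination (B 0 0 ^ 2 + B 1 0 ^ 2) * e1 + (B 0 1 ^ 2 + B 1 1 ^ 2) * e2
    + (2 * (B 0 0 * B 0 1 + B 1 0 * B 1 1)) * e3

lemma col_low (K₁ σ₁ a b : ℝ) (hK₁ : 0 < K₁) (h : K₁ ≤ σ₁)
    (hab : a ^ 2 + b ^ 2 ≤ K₁ ^ 2) : (K₁ - σ₁) ^ 2 ≤ (a - σ₁) ^ 2 + b ^ 2 := by
  have ha : a ≤ K₁ := by nlinarith [sq_nonneg b]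
  nlinarith [mul_nonneg (sub_nonneg.2 h) (sub_nonneg.2 ha), sq_nonneg (a - K₁)]

lemma col_high (K₂ σ₂ a b : ℝ) (hσ₂ : 0 ≤ σ₂) (h : σ₂ ≤ K₂)
    (hab : K₂ ^ 2 ≤ a ^ 2 + b ^ 2) : (K₂ - σ₂) ^ 2 ≤ a ^ 2 + (b - σ₂) ^ 2 := by
  rcases le_total b K₂ with hb | hb
  · nlinarith [mul_nonneg hσ₂ (sub_nonneg.2 hb)]
  · nlinarith [mul_nonneg (sub_nonneg.2 hb)
      (by linarith : (0:ℝ) ≤ b + K₂ - 2 * σ₂), sq_nonneg a]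

/-- Projection onto matrices with singular values bounded in `[K₂, K₁]`:
optimality of clamping the singular values. -/
theorem stmt0 (K₁ K₂ σ₁ σ₂ : ℝ) (hK₂ : 0 < K₂) (hK : K₂ ≤ K₁)
    (hσ : σ₂ ≤ σ₁) (hσ₂ : 0 ≤ σ₂) (hKσ₁ : K₂ ≤ σ₁) (hσ₂K : σ₂ ≤ K₁)
    (U V A : Matrix (Fin 2) (Fin 2) ℝ)
    (hU : Uᵀ * U = 1) (hV : Vᵀ * V = 1)
    (hA : A = U * Matrix.diagonal ![σ₁, σ₂] * Vᵀ)
    (Mstar : Matrix (Fin 2) (Fin 2) ℝ)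
    (hMstar : Mstar = U * Matrix.diagonal ![min σ₁ K₁, max σ₂ K₂] * Vᵀ) :
    ∀ M : Matrix (Fin 2) (Fin 2) ℝ,
      (∀ x : Fin 2 → ℝ,
        K₂ * euclNorm2 x ≤ euclNorm2 (M.mulVec x) ∧
        euclNorm2 (M.mulVec x) ≤ K₁ * euclNorm2 x) →
      frob2 (Mstar - A) ≤ frob2 (M - A) := by
  intro M hM
  have hK₁ : (0:ℝ) < K₁ := lt_of_lt_of_le hK₂ hK
  have hUU : U * Uᵀ = 1 := mul_eq_one_comm.mp hU
  have hVV : V * Vᵀ = 1 := mul_eq_one_comm.mp hV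
  -- invariance of the sum of squares under conjugation
  have inv : ∀ B : Matrix (Fin 2) (Fin 2) ℝ,
      ∑ i : Fin 2, ∑ j : Fin 2, ((Uᵀ * B * V) i j) ^ 2
        = ∑ i : Fin 2, ∑ j : Fin 2, (B i j) ^ 2 := by
    intro B
    have h1 := ssq_left Uᵀ (B * V) (by rwa [Matrix.transpose_transpose])
    have h2 := ssq_right V B hVV
    rw [Matrix.mul_assoc, h1, h2]
  -- sandwich lemma: Uᵀ * (U * D * Vᵀ) * V = D
  have sand : ∀ D : Matrix (Fin 2) (Fin 2) ℝ, Uᵀ * (U * D * Vᵀ) * V = D := by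
    intro D
    rw [← Matrix.mul_assoc, ← Matrix.mul_assoc, hU, Matrix.one_mul,
      Matrix.mul_assoc, hV, Matrix.mul_one]
  obtain ⟨N, hN⟩ : ∃ N : Matrix (Fin 2) (Fin 2) ℝ, N = Uᵀ * M * V := ⟨_, rfl⟩
  set c₁ : ℝ := min σ₁ K₁ with hc₁
  set c₂ : ℝ := max σ₂ K₂ with hc₂
  -- conjugated differences
  have hMdiff : Uᵀ * (M - A) * V = N - Matrix.diagonal ![σ₁, σ₂] := by
    rw [Matrix.mul_sub, Matrix.sub_mul, hA, sand, hN]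
  have hMsdiff : Uᵀ * (Mstar - A) * V
      = Matrix.diagonal ![c₁, c₂] - Matrix.diagonal ![σ₁, σ₂] := by
    rw [Matrix.mul_sub, Matrix.sub_mul, hA, hMstar, sand, sand]
  -- frobenius of Mstar - A
  have frobMs : frob2 (Mstar - A) = Real.sqrt ((c₁ - σ₁) ^ 2 + (c₂ - σ₂) ^ 2) := by
    unfold frob2
    rw [← inv (Mstar - A), hMsdiff]
    congr 1
    simp [Fin.sum_univ_two, Matrix.diagonal, Matrix.sub_apply]
    try ring
  have frobM : frob2 (M - A)
      = Real.sqrt ((N 0 0 - σ₁) ^ 2 + (N 0 1) ^ 2 + (N 1 0) ^ 2 + (N 1 1 - σ₂) ^ 2) := by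
    unfold frob2
    rw [← inv (M - A), hMdiff]
    congr 1
    simp [Fin.sum_univ_two, Matrix.diagonal, Matrix.sub_apply]
    try ring
  -- row relations of U
  have f1 : U 0 0 ^ 2 + U 0 1 ^ 2 = 1 := by
    have := congrFun (congrFun hUU 0) 0
    simp [Matrix.mul_apply, Fin.sum_univ_two, Matrix.one_apply] at this
    linarith [this]
  have f2 : U 1 0 ^ 2 + U 1 1 ^ 2 = 1 := by
    have := congrFun (congrFun hUU 1) 1
    simp [Matrix.mul_apply, Fin.sum_univ_two, Matrix.one_apply] at this
    linarith [this]
  have f3 : U 0 0 * U 1 0 + U 0 1 * U 1 1 = 0 := by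
    have := congrFun (congrFun hUU 0) 1
    simp [Matrix.mul_apply, Fin.sum_univ_two, Matrix.one_apply] at this
    linarith [this]
  -- columns of V have unit euclidean norm
  have g1 : V 0 0 ^ 2 + V 1 0 ^ 2 = 1 := by
    have := congrFun (congrFun hV 0) 0
    simp [Matrix.mul_apply, Fin.sum_univ_two, Matrix.one_apply] at this
    linarith [this]
  have g2 : V 0 1 ^ 2 + V 1 1 ^ 2 = 1 := by
    have := congrFun (congrFun hV 1) 1
    simp [Matrix.mul_apply, Fin.sum_univ_two, Matrix.one_apply] at this
    linarith [this]
  -- column norm bounds on N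
  have colbound : ∀ j : Fin 2, (V 0 j ^ 2 + V 1 j ^ 2 = 1) →
      K₂ ^ 2 ≤ N 0 j ^ 2 + N 1 j ^ 2 ∧ N 0 j ^ 2 + N 1 j ^ 2 ≤ K₁ ^ 2 := by
    intro j hg
    obtain ⟨x, hx⟩ : ∃ x : Fin 2 → ℝ, x = ![V 0 j, V 1 j] := ⟨_, rfl⟩
    have hx1 : euclNorm2 x = 1 := by
      unfold euclNorm2
      have hxx : x 0 ^ 2 + x 1 ^ 2 = 1 := by
        simp only [hx, Matrix.cons_val_zero, Matrix.cons_val_one, Matrix.head_cons]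
        exact hg
      rw [hxx, Real.sqrt_one]
    obtain ⟨hl, hr⟩ := hM x
    rw [hx1, mul_one] at hl hr
    obtain ⟨y, hy⟩ : ∃ y : Fin 2 → ℝ, y = M.mulVec x := ⟨_, rfl⟩
    rw [← hy] at hl hr
    have hyn : euclNorm2 y = Real.sqrt (y 0 ^ 2 + y 1 ^ 2) := rfl
    rw [hyn] at hl hr
    have hynn : (0:ℝ) ≤ y 0 ^ 2 + y 1 ^ 2 := by positivity
    have hsq := Real.sq_sqrt hynn
    have hsn := Real.sqrt_nonneg (y 0 ^ 2 + y 1 ^ 2)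
    have hupper : y 0 ^ 2 + y 1 ^ 2 ≤ K₁ ^ 2 := by
      rw [← hsq]; exact pow_le_pow_left₀ hsn hr 2
    have hlower : K₂ ^ 2 ≤ y 0 ^ 2 + y 1 ^ 2 := by
      rw [← hsq]; exact pow_le_pow_left₀ hK₂.le hl 2
    have hy0 : y 0 = M 0 0 * V 0 j + M 0 1 * V 1 j := by
      simp [hy, hx, Matrix.mulVec, dotProduct, Fin.sum_univ_two]
    have hy1 : y 1 = M 1 0 * V 0 j + M 1 1 * V 1 j := by
      simp [hy, hx, Matrix.mulVec, dotProduct, Fin.sum_univ_two]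
    have hN0 : N 0 j = U 0 0 * y 0 + U 1 0 * y 1 := by
      rw [hy0, hy1, hN]
      simp [Matrix.mul_apply, Fin.sum_univ_two]
      ring
    have hN1 : N 1 j = U 0 1 * y 0 + U 1 1 * y 1 := by
      rw [hy0, hy1, hN]
      simp [Matrix.mul_apply, Fin.sum_univ_two]
      ring
    have hsum : N 0 j ^ 2 + N 1 j ^ 2 = y 0 ^ 2 + y 1 ^ 2 := by
      rw [hN0, hN1]
      linear_combination y 0 ^ 2 * f1 + y 1 ^ 2 * f2 + 2 * (y 0 * y 1) * f3
    rw [hsum]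
    exact ⟨hlower, hupper⟩
  obtain ⟨hlo0, hup0⟩ := colbound 0 g1
  obtain ⟨hlo1, hup1⟩ := colbound 1 g2
  -- scalar inequalities
  have key1 : (c₁ - σ₁) ^ 2 ≤ (N 0 0 - σ₁) ^ 2 + (N 1 0) ^ 2 := by
    rcases le_total σ₁ K₁ with h | h
    · rw [hc₁, min_eq_left h]
      simp
      positivity
    · rw [hc₁, min_eq_right h]
      exact col_low K₁ σ₁ (N 0 0) (N 1 0) hK₁ h hup0
  have key2 : (c₂ - σ₂) ^ 2 ≤ (N 0 1) ^ 2 + (N 1 1 - σ₂) ^ 2 := by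
    rcases le_total K₂ σ₂ with h | h
    · rw [hc₂, max_eq_left h]
      simp
      positivity
    · rw [hc₂, max_eq_right h]
      exact col_high K₂ σ₂ (N 0 1) (N 1 1) hσ₂ h hlo1
  rw [frobMs, frobM]
  apply Real.sqrt_le_sqrt
  linarith
end

section
/- (von Neumann-type trace inequality, used in the Procrustes argument) Let n ≥ 1 and let A = U₁ D₁ V₁ᵀ and B = U₂ D₂ V₂ᵀ be real n×n matrices, where U₁, V₁, U₂, V₂ are orthogonal and D₁ = diag(a₁, …, aₙ), D₂ = diag(b₁, …, bₙ) are diagonal with a₁ ≥ a₂ ≥ … ≥ aₙ ≥ 0 and b₁ ≥ b₂ ≥ … ≥ bₙ ≥ 0. Then trace(Aᵀ B) ≤ Σᵢ aᵢ bᵢ. -/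
open Matrix

private lemma ds_le {n : ℕ} (S : Matrix (Fin n) (Fin n) ℝ)
    (hS : S ∈ doublyStochastic ℝ (Fin n))
    (a b : Fin n → ℝ) (hab : Monovary a b) :
    ∑ i, ∑ j, a i * b j * S i j ≤ ∑ i, a i * b i := by
  obtain ⟨w, hw0, hw1, hwS⟩ := exists_eq_sum_perm_of_mem_doublyStochastic hS
  let F : Matrix (Fin n) (Fin n) ℝ →ₗ[ℝ] ℝ :=
    { toFun := fun M => ∑ i, ∑ j, a i * b j * M i j
      map_add' := by
        intro M N
        simp [Matrix.add_apply, mul_add, Finset.sum_add_distrib]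
      map_smul' := by
        intro c M
        simp [Matrix.smul_apply, Finset.mul_sum, smul_eq_mul]
        congr 1; ext i; congr 1; ext j; ring }
  have hFS : F S = ∑ σ : Equiv.Perm (Fin n), w σ * ∑ i, a i * b (σ i) := by
    rw [← hwS, map_sum]
    refine Finset.sum_congr rfl fun σ _ => ?_
    rw [LinearMap.map_smul, smul_eq_mul]
    congr 1
    simp only [F, LinearMap.coe_mk, AddHom.coe_mk, Equiv.Perm.permMatrix,
      PEquiv.toMatrix_apply, Equiv.toPEquiv_apply, Option.mem_def, Option.some.injEq,
      mul_ite, mul_one, mul_zero]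
    refine Finset.sum_congr rfl fun i _ => ?_
    simp
  have hF : F S = ∑ i, ∑ j, a i * b j * S i j := rfl
  rw [← hF, hFS]
  calc ∑ σ : Equiv.Perm (Fin n), w σ * ∑ i, a i * b (σ i)
      ≤ ∑ σ : Equiv.Perm (Fin n), w σ * ∑ i, a i * b i := by
        refine Finset.sum_le_sum fun σ _ => mul_le_mul_of_nonneg_left ?_ (hw0 σ)
        simpa only [smul_eq_mul] using hab.sum_smul_comp_perm_le_sum_smul (σ := σ)
    _ = ∑ i, a i * b i := by rw [← Finset.sum_mul, hw1, one_mul]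

/-- von Neumann-type trace inequality: if `A = U₁ D₁ V₁ᵀ` and `B = U₂ D₂ V₂ᵀ`
with `U₁, V₁, U₂, V₂` orthogonal and `D₁ = diag(a)`, `D₂ = diag(b)` having
nonincreasing nonnegative diagonal entries, then `trace(Aᵀ B) ≤ Σᵢ aᵢ bᵢ`. -/
theorem stmt2 (n : ℕ) (hn : 1 ≤ n)
    (U₁ V₁ U₂ V₂ A B : Matrix (Fin n) (Fin n) ℝ)
    (hU₁ : U₁ᵀ * U₁ = 1) (hV₁ : V₁ᵀ * V₁ = 1)
    (hU₂ : U₂ᵀ * U₂ = 1) (hV₂ : V₂ᵀ * V₂ = 1)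
    (a b : Fin n → ℝ)
    (ha_mono : ∀ i j : Fin n, i ≤ j → a j ≤ a i)
    (hb_mono : ∀ i j : Fin n, i ≤ j → b j ≤ b i)
    (ha_nonneg : ∀ i, 0 ≤ a i) (hb_nonneg : ∀ i, 0 ≤ b i)
    (hA : A = U₁ * Matrix.diagonal a * V₁ᵀ)
    (hB : B = U₂ * Matrix.diagonal b * V₂ᵀ) :
    Matrix.trace (Aᵀ * B) ≤ ∑ i, a i * b i := by
  -- orthogonality both sides
  have hU₁' : U₁ * U₁ᵀ = 1 := mul_eq_one_comm.mp hU₁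
  have hV₁' : V₁ * V₁ᵀ = 1 := mul_eq_one_comm.mp hV₁
  have hU₂' : U₂ * U₂ᵀ = 1 := mul_eq_one_comm.mp hU₂
  have hV₂' : V₂ * V₂ᵀ = 1 := mul_eq_one_comm.mp hV₂
  set P : Matrix (Fin n) (Fin n) ℝ := U₁ᵀ * U₂ with hPdef
  set Q : Matrix (Fin n) (Fin n) ℝ := V₂ᵀ * V₁ with hQdef
  have hPPt : P * Pᵀ = 1 := by
    simp only [hPdef, Matrix.transpose_mul, Matrix.transpose_transpose]
    calc U₁ᵀ * U₂ * (U₂ᵀ * U₁) = U₁ᵀ * (U₂ * U₂ᵀ) * U₁ := by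
          simp only [Matrix.mul_assoc]
      _ = 1 := by rw [hU₂', Matrix.mul_one, hU₁]
  have hPtP : Pᵀ * P = 1 := mul_eq_one_comm.mp hPPt
  have hQQt : Q * Qᵀ = 1 := by
    simp only [hQdef, Matrix.transpose_mul, Matrix.transpose_transpose]
    calc V₂ᵀ * V₁ * (V₁ᵀ * V₂) = V₂ᵀ * (V₁ * V₁ᵀ) * V₂ := by
          simp only [Matrix.mul_assoc]
      _ = 1 := by rw [hV₁', Matrix.mul_one, hV₂]
  have hQtQ : Qᵀ * Q = 1 := mul_eq_one_comm.mp hQQt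
  -- trace computation
  have htr : Matrix.trace (Aᵀ * B)
      = ∑ i, ∑ j, a i * P i j * b j * Q j i := by
    have : Aᵀ * B = V₁ * (Matrix.diagonal a * P * Matrix.diagonal b * Q * V₁ᵀ) := by
      rw [hA, hB, hPdef, hQdef]
      simp only [Matrix.transpose_mul, Matrix.transpose_transpose, Matrix.diagonal_transpose,
        Matrix.mul_assoc, hV₁', Matrix.mul_one]
    rw [this, Matrix.trace_mul_comm]
    have h2 : Matrix.diagonal a * P * Matrix.diagonal b * Q * V₁ᵀ * V₁
        = Matrix.diagonal a * P * Matrix.diagonal b * Q := by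
      rw [Matrix.mul_assoc, hV₁, Matrix.mul_one]
    rw [h2, Matrix.trace]
    refine Finset.sum_congr rfl fun i _ => ?_
    rw [Matrix.diag_apply, Matrix.mul_apply]
    refine Finset.sum_congr rfl fun j _ => ?_
    rw [Matrix.mul_diagonal, Matrix.diagonal_mul]
  rw [htr]
  -- the doubly stochastic matrix
  set S : Matrix (Fin n) (Fin n) ℝ := Matrix.of fun i j => (P i j ^ 2 + Q j i ^ 2) / 2 with hSdef
  have hrowP : ∀ i, ∑ j, P i j ^ 2 = 1 := by
    intro i
    have := congrFun (congrFun hPPt i) i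
    simpa [Matrix.mul_apply, Matrix.one_apply, sq] using this
  have hcolP : ∀ j, ∑ i, P i j ^ 2 = 1 := by
    intro j
    have := congrFun (congrFun hPtP j) j
    simpa [Matrix.mul_apply, Matrix.one_apply, sq] using this
  have hrowQ : ∀ i, ∑ j, Q i j ^ 2 = 1 := by
    intro i
    have := congrFun (congrFun hQQt i) i
    simpa [Matrix.mul_apply, Matrix.one_apply, sq] using this
  have hcolQ : ∀ j, ∑ i, Q i j ^ 2 = 1 := by
    intro j
    have := congrFun (congrFun hQtQ j) j
    simpa [Matrix.mul_apply, Matrix.one_apply, sq] using this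
  have hS : S ∈ doublyStochastic ℝ (Fin n) := by
    rw [mem_doublyStochastic_iff_sum]
    refine ⟨fun i j => by simp only [hSdef, Matrix.of_apply]; positivity, fun i => ?_, fun j => ?_⟩
    · simp only [hSdef, Matrix.of_apply]
      rw [← Finset.sum_div, Finset.sum_add_distrib, hrowP i, hcolQ i]
      norm_num
    · simp only [hSdef, Matrix.of_apply]
      rw [← Finset.sum_div, Finset.sum_add_distrib, hcolP j, hrowQ j]
      norm_num
  -- pointwise bound
  have hpt : ∑ i, ∑ j, a i * P i j * b j * Q j i ≤ ∑ i, ∑ j, a i * b j * S i j := by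
    refine Finset.sum_le_sum fun i _ => Finset.sum_le_sum fun j _ => ?_
    have h1 : P i j * Q j i ≤ (P i j ^ 2 + Q j i ^ 2) / 2 := by nlinarith [sq_nonneg (P i j - Q j i)]
    have h2 : 0 ≤ a i * b j := mul_nonneg (ha_nonneg i) (hb_nonneg j)
    calc a i * P i j * b j * Q j i = (a i * b j) * (P i j * Q j i) := by ring
      _ ≤ (a i * b j) * ((P i j ^ 2 + Q j i ^ 2) / 2) := mul_le_mul_of_nonneg_left h1 h2
      _ = a i * b j * S i j := rfl
  refine hpt.trans (ds_le S hS a b ?_)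
  intro i j hb
  rcases le_total i j with h | h
  · exact absurd (hb_mono i j h) (not_le.mpr hb)
  · exact ha_mono j i h
end

section
/- (Key inequality in the proof of the projection theorem) Let n ≥ 1, let D = diag(d₁, …, dₙ) and Σ = diag(s₁, …, sₙ) be real diagonal n×n matrices with d₁ ≥ … ≥ dₙ ≥ 0 and s₁ ≥ … ≥ sₙ ≥ 0, and let Q₁, Q₂ be orthogonal n×n matrices. Then ‖D − Q₁ᵀ Σ Q₂‖_F ≥ ‖D − Σ‖_F. -/
open Matrix

/-- Frobenius norm of a real n×n matrix. -/
noncomputable def frobN {n : ℕ} (B : Matrix (Fin n) (Fin n) ℝ) : ℝ :=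
  Real.sqrt (∑ i : Fin n, ∑ j : Fin n, (B i j) ^ 2)

open Finset in
/-- Block sum of squares of an orthogonal matrix is at most the min of the block dimensions. -/
lemma frob_blocksq {n : ℕ} (U : Matrix (Fin n) (Fin n) ℝ) (hU : Uᵀ * U = 1) (hU' : U * Uᵀ = 1)
    (S T : Finset (Fin n)) :
    ∑ i ∈ S, ∑ k ∈ T, (U k i)^2 ≤ min S.card T.card := by
  rw [Nat.cast_min]
  apply le_min
  · calc ∑ i ∈ S, ∑ k ∈ T, (U k i)^2 ≤ ∑ i ∈ S, 1 := by
          apply Finset.sum_le_sum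
          intro i _
          calc ∑ k ∈ T, (U k i)^2 ≤ ∑ k : Fin n, (U k i)^2 := by
                apply Finset.sum_le_sum_of_subset_of_nonneg (Finset.subset_univ T)
                intros; positivity
            _ = (Uᵀ * U) i i := by simp [Matrix.mul_apply, sq]
            _ = 1 := by rw [hU]; simp
        _ = S.card := by simp
  · rw [Finset.sum_comm]
    calc ∑ k ∈ T, ∑ i ∈ S, (U k i)^2 ≤ ∑ k ∈ T, 1 := by
          apply Finset.sum_le_sum
          intro k _
          calc ∑ i ∈ S, (U k i)^2 ≤ ∑ i : Fin n, (U k i)^2 := by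
                apply Finset.sum_le_sum_of_subset_of_nonneg (Finset.subset_univ S)
                intros; positivity
            _ = (U * Uᵀ) k k := by simp [Matrix.mul_apply, sq]
            _ = 1 := by rw [hU']; simp
        _ = T.card := by simp

open Finset in
/-- Cauchy–Schwarz bound for blocks of two orthogonal matrices. -/
lemma frob_csbound {n : ℕ} (U V : Matrix (Fin n) (Fin n) ℝ)
    (hU : Uᵀ * U = 1) (hU' : U * Uᵀ = 1) (hV : Vᵀ * V = 1) (hV' : V * Vᵀ = 1)
    (S T : Finset (Fin n)) :
    ∑ i ∈ S, ∑ k ∈ T, U k i * V k i ≤ min S.card T.card := by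
  have hb0 : (0:ℝ) ≤ ((min S.card T.card : ℕ) : ℝ) := by positivity
  have key : (∑ i ∈ S, ∑ k ∈ T, U k i * V k i) ^ 2 ≤ ((min S.card T.card : ℕ) : ℝ) ^ 2 := by
    have cs := Finset.sum_mul_sq_le_sq_mul_sq (S ×ˢ T)
      (fun p => U p.2 p.1) (fun p => V p.2 p.1)
    rw [Finset.sum_product, Finset.sum_product, Finset.sum_product] at cs
    have e2 := frob_blocksq U hU hU' S T
    have e3 := frob_blocksq V hV hV' S T
    have h2 : (0:ℝ) ≤ ∑ i ∈ S, ∑ k ∈ T, (U k i) ^ 2 := by positivity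
    have h3 : (0:ℝ) ≤ ∑ i ∈ S, ∑ k ∈ T, (V k i) ^ 2 := by positivity
    calc (∑ i ∈ S, ∑ k ∈ T, U k i * V k i) ^ 2
        ≤ (∑ i ∈ S, ∑ k ∈ T, (U k i)^2) * (∑ i ∈ S, ∑ k ∈ T, (V k i)^2) := cs
      _ ≤ ((min S.card T.card : ℕ) : ℝ) ^ 2 := by nlinarith [mul_le_mul e2 e3 h3 hb0]
  have h1 := Real.sqrt_le_sqrt key
  rw [Real.sqrt_sq_eq_abs, Real.sqrt_sq hb0] at h1
  linarith [le_abs_self (∑ i ∈ S, ∑ k ∈ T, U k i * V k i)]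

open Finset in
lemma frob_swapsum {n : ℕ} (f : Fin n → Fin n → ℝ) :
    ∑ p : Fin n, ∑ i ∈ Iic p, f p i = ∑ i : Fin n, ∑ p ∈ Ici i, f p i := by
  have h1 : ∀ p : Fin n, ∑ i ∈ Iic p, f p i = ∑ i : Fin n, if i ≤ p then f p i else 0 := by
    intro p
    rw [← Finset.sum_filter]
    congr 1
    ext a; simp
  have h2 : ∀ i : Fin n, ∑ p ∈ Ici i, f p i = ∑ p : Fin n, if i ≤ p then f p i else 0 := by
    intro i
    rw [← Finset.sum_filter]
    congr 1
    ext a; simp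
  simp_rw [h1, h2]
  exact Finset.sum_comm

open Finset in
lemma frob_deltasum {n : ℕ} (p q : Fin n) :
    ∑ i ∈ Iic p, ∑ k ∈ Iic q, (if i = k then (1:ℝ) else 0)
      = min (Iic p).card (Iic q).card := by
  have h1 : ∀ i : Fin n, (∑ k ∈ Iic q, if i = k then (1:ℝ) else 0)
      = if i ∈ Iic q then 1 else 0 := fun i => Finset.sum_ite_eq (Iic q) i (fun _ => (1:ℝ))
  simp_rw [h1]
  rw [Finset.sum_ite_mem]
  rcases le_total p q with h | h
  · rw [Finset.inter_eq_left.mpr (Finset.Iic_subset_Iic.mpr h)]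
    rw [min_eq_left (Finset.card_le_card (Finset.Iic_subset_Iic.mpr h))]
    simp
  · rw [Finset.inter_eq_right.mpr (Finset.Iic_subset_Iic.mpr h)]
    rw [min_eq_right (Finset.card_le_card (Finset.Iic_subset_Iic.mpr h))]
    simp

/-- The Abel-summation increments of a nonincreasing nonnegative sequence. -/
noncomputable def frobAlph {n : ℕ} (d : Fin n → ℝ) (p : Fin n) : ℝ :=
  if h : (p:ℕ)+1 < n then d p - d ⟨(p:ℕ)+1, h⟩ else d p

lemma frobAlph_nonneg {n : ℕ} (d : Fin n → ℝ)
    (hmono : ∀ i j : Fin n, i ≤ j → d j ≤ d i) (hnn : ∀ i, 0 ≤ d i) (p : Fin n) :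
    0 ≤ frobAlph d p := by
  unfold frobAlph
  split
  · next h =>
    have := hmono p ⟨(p:ℕ)+1, h⟩ (by simp [Fin.le_def])
    linarith
  · exact hnn p

open Finset in
lemma frob_sum_alph {n : ℕ} (d : Fin n → ℝ) (i : Fin n) :
    ∑ p ∈ Ici i, frobAlph d p = d i := by
  classical
  set D : ℕ → ℝ := fun m => if h : m < n then d ⟨m, h⟩ else 0 with hD
  have halph : ∀ p : Fin n, frobAlph d p = D (p:ℕ) - D ((p:ℕ)+1) := by
    intro p
    unfold frobAlph
    split
    · next h => simp [hD, h, p.isLt]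
    · next h => simp [hD, h, p.isLt]
  simp_rw [halph]
  have hmap : ∑ p ∈ Ici i, (D (p:ℕ) - D ((p:ℕ)+1))
      = ∑ m ∈ Finset.Icc (i:ℕ) (n-1), (D m - D (m+1)) := by
    rw [Finset.Icc_sub_one_right_eq_Ico_of_not_isMin (by rw [isMin_iff_eq_bot]; exact i.pos.ne'), ← Fin.map_valEmbedding_Ici, Finset.sum_map]
    rfl
  rw [hmap]
  have hn : 0 < n := i.pos
  have hIcc : Finset.Icc (i:ℕ) (n-1) = Finset.Ico (i:ℕ) n :=
    Finset.Icc_sub_one_right_eq_Ico_of_not_isMin (by rw [isMin_iff_eq_bot]; exact hn.ne') _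
  rw [hIcc, Finset.sum_Ico_eq_sum_range]
  have tele : ∑ m ∈ Finset.range (n - (i:ℕ)), (D ((i:ℕ)+m) - D ((i:ℕ)+m+1))
      = D ((i:ℕ)+0) - D ((i:ℕ) + (n - (i:ℕ))) := Finset.sum_range_sub' (fun m => D ((i:ℕ)+m)) _
  have hin : (i:ℕ) + (n - (i:ℕ)) = n := Nat.add_sub_cancel' i.isLt.le
  rw [hin] at tele
  simp only [Nat.add_zero] at tele
  calc ∑ m ∈ Finset.range (n - (i:ℕ)), (D ((i:ℕ)+m) - D ((i:ℕ)+m+1)) = D (i:ℕ) - D n := tele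
    _ = d i := by simp [hD, i.isLt]

open Finset in
lemma frob_rearrange {n : ℕ} (a b : Fin n → ℝ) (W : Fin n → Fin n → ℝ) :
    ∑ i : Fin n, ∑ k : Fin n, (∑ p ∈ Ici i, a p) * (∑ q ∈ Ici k, b q) * W i k
      = ∑ p : Fin n, ∑ q : Fin n, a p * b q * (∑ i ∈ Iic p, ∑ k ∈ Iic q, W i k) := by
  calc ∑ i : Fin n, ∑ k : Fin n, (∑ p ∈ Ici i, a p) * (∑ q ∈ Ici k, b q) * W i k
      = ∑ i : Fin n, ∑ k : Fin n, ∑ p ∈ Ici i, ∑ q ∈ Ici k, a p * b q * W i k := by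
        apply Finset.sum_congr rfl; intro i _
        apply Finset.sum_congr rfl; intro k _
        rw [Finset.sum_mul_sum, Finset.sum_mul]
        apply Finset.sum_congr rfl; intro p _
        rw [Finset.sum_mul]
    _ = ∑ i : Fin n, ∑ p ∈ Ici i, ∑ k : Fin n, ∑ q ∈ Ici k, a p * b q * W i k := by
        apply Finset.sum_congr rfl; intro i _
        exact Finset.sum_comm
    _ = ∑ p : Fin n, ∑ i ∈ Iic p, ∑ k : Fin n, ∑ q ∈ Ici k, a p * b q * W i k :=
        (frob_swapsum (fun p i => ∑ k : Fin n, ∑ q ∈ Ici k, a p * b q * W i k)).symm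
    _ = ∑ p : Fin n, ∑ i ∈ Iic p, ∑ q : Fin n, ∑ k ∈ Iic q, a p * b q * W i k := by
        apply Finset.sum_congr rfl; intro p _
        apply Finset.sum_congr rfl; intro i _
        exact (frob_swapsum (fun q k => a p * b q * W i k)).symm
    _ = ∑ p : Fin n, ∑ q : Fin n, ∑ i ∈ Iic p, ∑ k ∈ Iic q, a p * b q * W i k := by
        apply Finset.sum_congr rfl; intro p _
        exact Finset.sum_comm
    _ = ∑ p : Fin n, ∑ q : Fin n, a p * b q * (∑ i ∈ Iic p, ∑ k ∈ Iic q, W i k) := by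
        simp [Finset.mul_sum]

open Finset in
/-- The von Neumann-type core inequality. -/
lemma frob_core {n : ℕ} (d s : Fin n → ℝ)
    (hd_mono : ∀ i j : Fin n, i ≤ j → d j ≤ d i)
    (hs_mono : ∀ i j : Fin n, i ≤ j → s j ≤ s i)
    (hd_nonneg : ∀ i, 0 ≤ d i) (hs_nonneg : ∀ i, 0 ≤ s i)
    (U V : Matrix (Fin n) (Fin n) ℝ)
    (hU : Uᵀ * U = 1) (hU' : U * Uᵀ = 1) (hV : Vᵀ * V = 1) (hV' : V * Vᵀ = 1) :
    ∑ i : Fin n, ∑ k : Fin n, d i * s k * (U k i * V k i) ≤ ∑ i : Fin n, d i * s i := by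
  have L1 := frob_rearrange (frobAlph d) (frobAlph s) (fun i k => U k i * V k i)
  simp_rw [frob_sum_alph] at L1
  have L2 := frob_rearrange (frobAlph d) (frobAlph s) (fun i k => if i = k then (1:ℝ) else 0)
  simp_rw [frob_sum_alph] at L2
  have L3 : ∑ i : Fin n, ∑ k : Fin n, d i * s k * (if i = k then (1:ℝ) else 0)
      = ∑ i : Fin n, d i * s i := by
    apply Finset.sum_congr rfl; intro i _
    simp [mul_ite, Finset.sum_ite_eq]
  rw [L1, ← L3, L2]
  apply Finset.sum_le_sum
  intro p _
  apply Finset.sum_le_sum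
  intro q _
  have hαβ : 0 ≤ frobAlph d p * frobAlph s q :=
    mul_nonneg (frobAlph_nonneg d hd_mono hd_nonneg p) (frobAlph_nonneg s hs_mono hs_nonneg q)
  apply mul_le_mul_of_nonneg_left _ hαβ
  rw [frob_deltasum]
  exact frob_csbound U V hU hU' hV hV' (Iic p) (Iic q)

/-- Key inequality in the proof of the projection theorem:
`‖D − Q₁ᵀ Σ Q₂‖_F ≥ ‖D − Σ‖_F` for diagonal `D, Σ` with nonincreasing
nonnegative entries and orthogonal `Q₁, Q₂`. -/
theorem stmt3 (n : ℕ) (hn : 1 ≤ n)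
    (d s : Fin n → ℝ)
    (hd_mono : ∀ i j : Fin n, i ≤ j → d j ≤ d i)
    (hs_mono : ∀ i j : Fin n, i ≤ j → s j ≤ s i)
    (hd_nonneg : ∀ i, 0 ≤ d i) (hs_nonneg : ∀ i, 0 ≤ s i)
    (Q₁ Q₂ : Matrix (Fin n) (Fin n) ℝ)
    (hQ₁ : Q₁ᵀ * Q₁ = 1) (hQ₂ : Q₂ᵀ * Q₂ = 1) :
    frobN (Matrix.diagonal d - Matrix.diagonal s) ≤
      frobN (Matrix.diagonal d - Q₁ᵀ * Matrix.diagonal s * Q₂) := by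
  classical
  have hQ₁' : Q₁ * Q₁ᵀ = 1 := mul_eq_one_comm.mp hQ₁
  have hQ₂' : Q₂ * Q₂ᵀ = 1 := mul_eq_one_comm.mp hQ₂
  set A : Matrix (Fin n) (Fin n) ℝ := Q₁ᵀ * Matrix.diagonal s * Q₂ with hA
  unfold frobN
  apply Real.sqrt_le_sqrt
  -- LHS expansion
  have hLHS : ∑ i : Fin n, ∑ j : Fin n, ((Matrix.diagonal d - Matrix.diagonal s) i j)^2
      = ∑ i : Fin n, (d i - s i)^2 := by
    apply Finset.sum_congr rfl; intro i _
    have : ∀ j : Fin n, ((Matrix.diagonal d - Matrix.diagonal s) i j)^2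
        = if i = j then (d i - s i)^2 else 0 := by
      intro j
      by_cases h : i = j <;> simp [Matrix.sub_apply, Matrix.diagonal_apply, h]
    simp_rw [this]
    simp [Finset.sum_ite_eq]
  -- auxiliary facts about A
  have hAdiag : ∀ i : Fin n, A i i = ∑ k : Fin n, (Q₁ k i * s k) * Q₂ k i := by
    intro i
    rw [hA, Matrix.mul_apply]
    apply Finset.sum_congr rfl; intro k _
    rw [Matrix.mul_diagonal]
    rfl
  have F1 : ∑ i : Fin n, ∑ j : Fin n, (Matrix.diagonal d i j)^2 = ∑ i : Fin n, (d i)^2 := by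
    apply Finset.sum_congr rfl; intro i _
    have : ∀ j : Fin n, (Matrix.diagonal d i j)^2 = if i = j then (d i)^2 else 0 := by
      intro j
      by_cases h : i = j <;> simp [Matrix.diagonal_apply, h]
    simp_rw [this]
    simp [Finset.sum_ite_eq]
  have F2 : ∑ i : Fin n, ∑ j : Fin n, Matrix.diagonal d i j * A i j
      = ∑ i : Fin n, d i * A i i := by
    apply Finset.sum_congr rfl; intro i _
    have : ∀ j : Fin n, Matrix.diagonal d i j * A i j = if i = j then d i * A i j else 0 := by
      intro j
      by_cases h : i = j <;> simp [Matrix.diagonal_apply, h]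
    simp_rw [this]
    simp [Finset.sum_ite_eq]
  have F3 : ∑ i : Fin n, ∑ j : Fin n, (A i j)^2 = ∑ i : Fin n, (s i)^2 := by
    have htrace : ∑ i : Fin n, ∑ j : Fin n, (A i j)^2 = Matrix.trace (Aᵀ * A) := by
      rw [Matrix.trace]
      simp only [Matrix.diag_apply, Matrix.mul_apply, Matrix.transpose_apply, sq]
      exact Finset.sum_comm
    have hAtA : Aᵀ * A = Q₂ᵀ * (Matrix.diagonal s * Matrix.diagonal s) * Q₂ := by
      rw [hA]
      rw [Matrix.transpose_mul, Matrix.transpose_mul, Matrix.transpose_transpose,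
        Matrix.diagonal_transpose]
      calc Q₂ᵀ * (Matrix.diagonal s * Q₁) * (Q₁ᵀ * Matrix.diagonal s * Q₂)
          = Q₂ᵀ * Matrix.diagonal s * (Q₁ * Q₁ᵀ) * Matrix.diagonal s * Q₂ := by
            noncomm_ring
        _ = Q₂ᵀ * (Matrix.diagonal s * Matrix.diagonal s) * Q₂ := by
            rw [hQ₁']
            noncomm_ring
    rw [htrace, hAtA]
    rw [Matrix.trace_mul_comm, ← Matrix.mul_assoc, hQ₂', Matrix.one_mul,
      Matrix.diagonal_mul_diagonal, Matrix.trace_diagonal]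
    apply Finset.sum_congr rfl; intro i _
    ring
  have F4 : ∑ i : Fin n, d i * A i i ≤ ∑ i : Fin n, d i * s i := by
    have := frob_core d s hd_mono hs_mono hd_nonneg hs_nonneg Q₁ Q₂ hQ₁ hQ₁' hQ₂ hQ₂'
    calc ∑ i : Fin n, d i * A i i
        = ∑ i : Fin n, ∑ k : Fin n, d i * s k * (Q₁ k i * Q₂ k i) := by
          apply Finset.sum_congr rfl; intro i _
          rw [hAdiag, Finset.mul_sum]
          apply Finset.sum_congr rfl; intro k _
          ring
      _ ≤ ∑ i : Fin n, d i * s i := this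
  -- RHS expansion
  have hRHS : ∑ i : Fin n, ∑ j : Fin n, ((Matrix.diagonal d - A) i j)^2
      = ∑ i : Fin n, (d i)^2 - 2 * ∑ i : Fin n, d i * A i i + ∑ i : Fin n, (s i)^2 := by
    have hterm : ∀ i j : Fin n, ((Matrix.diagonal d - A) i j)^2
        = (Matrix.diagonal d i j)^2 - 2 * (Matrix.diagonal d i j * A i j) + (A i j)^2 := by
      intro i j
      rw [Matrix.sub_apply]
      ring
    simp_rw [hterm, Finset.sum_add_distrib, Finset.sum_sub_distrib, ← Finset.mul_sum]
    rw [F1, F2, F3]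
  have hLHS2 : ∑ i : Fin n, (d i - s i)^2
      = ∑ i : Fin n, (d i)^2 - 2 * ∑ i : Fin n, d i * s i + ∑ i : Fin n, (s i)^2 := by
    have hterm : ∀ i : Fin n, (d i - s i)^2
        = (d i)^2 - 2 * (d i * s i) + (s i)^2 := fun i => by ring
    simp_rw [hterm, Finset.sum_add_distrib, Finset.sum_sub_distrib, ← Finset.mul_sum]
  rw [hLHS, hRHS, hLHS2]
  linarith
end

section
/- (Pointwise div-form gradient relation for v) Let μ = ρ + iτ be a complex number with ρ² + τ² < 1, and define the real 2×2 matrix A = (1/(1 − ρ² − τ²)) · [[(ρ−1)² + τ², −2τ], [−2τ, (1+ρ)² + τ²]]. Let uₓ, u_y, vₓ, v_y be real numbers, set a = (uₓ + v_y)/2 + i·(vₓ − u_y)/2 and b = (uₓ − v_y)/2 + i·(u_y + vₓ)/2, and suppose b = μ·a. Then A·(vₓ, v_y) = (−u_y, uₓ). -/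
open Matrix Complex

/-- Pointwise div-form gradient relation for `v`: if `b = μ·a`, then
`A·(vₓ, v_y) = (−u_y, uₓ)`. -/
theorem stmt12 (ρ τ : ℝ) (hμ : ρ ^ 2 + τ ^ 2 < 1)
    (A : Matrix (Fin 2) (Fin 2) ℝ)
    (hA : A = (1 / (1 - ρ ^ 2 - τ ^ 2)) •
      !![(ρ - 1) ^ 2 + τ ^ 2, -2 * τ; -2 * τ, (1 + ρ) ^ 2 + τ ^ 2])
    (ux uy vx vy : ℝ)
    (a b : ℂ)
    (ha : a = ((ux + vy) / 2 : ℝ) + Complex.I * ((vx - uy) / 2 : ℝ))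
    (hb : b = ((ux - vy) / 2 : ℝ) + Complex.I * ((uy + vx) / 2 : ℝ))
    (hBeltrami : b = ((ρ : ℂ) + Complex.I * (τ : ℂ)) * a) :
    A.mulVec ![vx, vy] = ![-uy, ux] := by
  subst ha hb
  rw [Complex.ext_iff] at hBeltrami
  simp only [Complex.add_re, Complex.add_im, Complex.mul_re, Complex.mul_im,
    Complex.ofReal_re, Complex.ofReal_im, Complex.I_re, Complex.I_im] at hBeltrami
  obtain ⟨h1, h2⟩ := hBeltrami
  have hd : 1 - ρ ^ 2 - τ ^ 2 ≠ 0 := by nlinarith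
  subst hA
  funext i
  fin_cases i
  · simp [mulVec, dotProduct, Fin.sum_univ_two]
    field_simp
    linear_combination (2 * τ) * h1 + (2 * (1 - ρ)) * h2
  · simp [mulVec, dotProduct, Fin.sum_univ_two]
    field_simp
    linear_combination (-2 * (1 + ρ)) * h1 +
      (-2 * τ) * h2
end

section
/- (Solutions of the Beltrami equation satisfy the div-form elliptic equation) Let u, v : ℝ² → ℝ be twice continuously differentiable and let ρ, τ : ℝ² → ℝ be functions with ρ(x)² + τ(x)² < 1 for every x. For each x define A(x) = (1/(1 − ρ(x)² − τ(x)²)) · [[(ρ(x)−1)² + τ(x)², −2τ(x)], [−2τ(x), (1+ρ(x))² + τ(x)²]]. Suppose that at every point the Beltrami equation holds: (uₓ − v_y)/2 + i·(u_y + vₓ)/2 = (ρ + iτ)·((uₓ + v_y)/2 + i·(vₓ − u_y)/2). Then the vector field x ↦ A(x)·∇u(x) is divergence-free at every point, i.e. ∂ₓ(A∇u)₁ + ∂_y(A∇u)₂ = 0, and likewise x ↦ A(x)·∇v(x) is divergence-free. -/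
open Matrix Complex

/-- Partial derivative in the first coordinate direction. -/
noncomputable def pdx (f : ℝ × ℝ → ℝ) (p : ℝ × ℝ) : ℝ :=
  fderiv ℝ f p (1, 0)

/-- Partial derivative in the second coordinate direction. -/
noncomputable def pdy (f : ℝ × ℝ → ℝ) (p : ℝ × ℝ) : ℝ :=
  fderiv ℝ f p (0, 1)

/-- The coefficient matrix of the div-form elliptic equation associated to the
Beltrami coefficient `μ = ρ + iτ`. -/
noncomputable def coeffA (ρ τ : ℝ) : Matrix (Fin 2) (Fin 2) ℝ :=
  (1 / (1 - ρ ^ 2 - τ ^ 2)) •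
    !![(ρ - 1) ^ 2 + τ ^ 2, -2 * τ; -2 * τ, (1 + ρ) ^ 2 + τ ^ 2]

lemma pdx_pdy_symm (v : ℝ × ℝ → ℝ) (hv : ContDiff ℝ 2 v) (p : ℝ × ℝ) :
    pdx (pdy v) p = pdy (pdx v) p := by
  have hd1 : Differentiable ℝ v := hv.differentiable (by norm_num)
  have hd2 : ContDiff ℝ 1 (fderiv ℝ v) := hv.fderiv_right (by norm_num)
  have hdd : DifferentiableAt ℝ (fderiv ℝ v) p := (hd2.differentiable (by norm_num)) p
  have hsymm := second_derivative_symmetric (f := v) (f' := fderiv ℝ v)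
    (fun y => (hd1 y).hasFDerivAt) hdd.hasFDerivAt (1, 0) (0, 1)
  unfold pdx pdy
  rw [fderiv_clm_apply hdd (differentiableAt_const _),
    fderiv_clm_apply hdd (differentiableAt_const _)]
  simpa using hsymm

lemma mulVec0 (r t a b : ℝ) : (coeffA r t).mulVec ![a, b] 0 =
    (1 / (1 - r ^ 2 - t ^ 2)) * (((r - 1) ^ 2 + t ^ 2) * a + (-2 * t) * b) := by
  simp [coeffA, Matrix.mulVec, dotProduct, Fin.sum_univ_two]
  ring

lemma mulVec1 (r t a b : ℝ) : (coeffA r t).mulVec ![a, b] 1 =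
    (1 / (1 - r ^ 2 - t ^ 2)) * ((-2 * t) * a + ((1 + r) ^ 2 + t ^ 2) * b) := by
  simp [coeffA, Matrix.mulVec, dotProduct, Fin.sum_univ_two]
  ring

/-- Solutions of the Beltrami equation satisfy the div-form elliptic
equations: the vector fields `A∇u` and `A∇v` are divergence-free. -/
theorem stmt13 (u v : ℝ × ℝ → ℝ)
    (hu : ContDiff ℝ 2 u) (hv : ContDiff ℝ 2 v)
    (ρ τ : ℝ × ℝ → ℝ) (hμ : ∀ p : ℝ × ℝ, (ρ p) ^ 2 + (τ p) ^ 2 < 1)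
    (hBeltrami : ∀ p : ℝ × ℝ,
      (((pdx u p - pdy v p) / 2 : ℝ) + Complex.I * ((pdy u p + pdx v p) / 2 : ℝ)) =
        ((ρ p : ℂ) + Complex.I * (τ p : ℂ)) *
          (((pdx u p + pdy v p) / 2 : ℝ) + Complex.I * ((pdx v p - pdy u p) / 2 : ℝ))) :
    (∀ p : ℝ × ℝ,
      pdx (fun q => (coeffA (ρ q) (τ q)).mulVec ![pdx u q, pdy u q] 0) p +
        pdy (fun q => (coeffA (ρ q) (τ q)).mulVec ![pdx u q, pdy u q] 1) p = 0) ∧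
    (∀ p : ℝ × ℝ,
      pdx (fun q => (coeffA (ρ q) (τ q)).mulVec ![pdx v q, pdy v q] 0) p +
        pdy (fun q => (coeffA (ρ q) (τ q)).mulVec ![pdx v q, pdy v q] 1) p = 0) := by
  have hD : ∀ p : ℝ × ℝ, (1 : ℝ) - (ρ p) ^ 2 - (τ p) ^ 2 ≠ 0 := fun p => by
    have := hμ p; nlinarith
  -- extract real and imaginary parts of the Beltrami equation
  have hre : ∀ p : ℝ × ℝ, (pdx u p - pdy v p) / 2 =
      ρ p * ((pdx u p + pdy v p) / 2) - τ p * ((pdx v p - pdy u p) / 2) := by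
    intro p
    have h := congrArg Complex.re (hBeltrami p)
    simpa using h
  have him : ∀ p : ℝ × ℝ, (pdy u p + pdx v p) / 2 =
      ρ p * ((pdx v p - pdy u p) / 2) + τ p * ((pdx u p + pdy v p) / 2) := by
    intro p
    have h := congrArg Complex.im (hBeltrami p)
    simpa using h
  have ku0 : (fun q => (coeffA (ρ q) (τ q)).mulVec ![pdx u q, pdy u q] 0) = fun q => pdy v q := by
    funext q
    rw [mulVec0]
    have e1 := hre q; have e2 := him q
    rw [one_div, inv_mul_eq_div, div_eq_iff (hD q)]
    linear_combination (2 * (1 - ρ q)) * e1 - (2 * τ q) * e2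
  have ku1 : (fun q => (coeffA (ρ q) (τ q)).mulVec ![pdx u q, pdy u q] 1) =
      fun q => -(pdx v q) := by
    funext q
    rw [mulVec1]
    have e1 := hre q; have e2 := him q
    rw [one_div, inv_mul_eq_div, div_eq_iff (hD q)]
    linear_combination (-2 * τ q) * e1 + (2 * (1 + ρ q)) * e2
  have kv0 : (fun q => (coeffA (ρ q) (τ q)).mulVec ![pdx v q, pdy v q] 0) =
      fun q => -(pdy u q) := by
    funext q
    rw [mulVec0]
    have e1 := hre q; have e2 := him q
    rw [one_div, inv_mul_eq_div, div_eq_iff (hD q)]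
    linear_combination (2 * τ q) * e1 + (2 * (1 - ρ q)) * e2
  have kv1 : (fun q => (coeffA (ρ q) (τ q)).mulVec ![pdx v q, pdy v q] 1) = fun q => pdx u q := by
    funext q
    rw [mulVec1]
    have e1 := hre q; have e2 := him q
    rw [one_div, inv_mul_eq_div, div_eq_iff (hD q)]
    linear_combination (-2 * (1 + ρ q)) * e1 - (2 * τ q) * e2
  constructor
  · intro p
    rw [ku0, ku1]
    have : pdy (fun q => -(pdx v q)) p = -(pdy (pdx v) p) := by
      unfold pdy pdx
      rw [fderiv_fun_neg]
      simp
    rw [this]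
    show pdx (pdy v) p + -(pdy (pdx v) p) = 0
    rw [pdx_pdy_symm v hv p]; ring
  · intro p
    rw [kv0, kv1]
    have : pdx (fun q => -(pdy u q)) p = -(pdx (pdy u) p) := by
      unfold pdy pdx
      rw [fderiv_fun_neg]
      simp
    rw [this]
    show -(pdx (pdy u) p) + pdy (pdx u) p = 0
    rw [pdx_pdy_symm u hu p]; ring
end
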